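/- arXiv:2410.14440 — 6 statements merged into one kernel-verified Lean document; each statement's English description precedes it below -/
import Mathlib

section
/- Let F be a Set-functor that preserves 1/4-iso pullbacks, and let r₁ : X ⇸ Y, r₂ : Y ⇸ Z and r₃ : Z ⇸ W be relations. Then there exist relations s₁ : X ⇸ Y', s₂ : Y' ⇸ Z' and s₃ : Z' ⇸ W such that s₁, s₂, s₃ is a Barr upper bound of r₁, r₂, r₃ and moreover: (1) for all y, y' ∈ Y' and z ∈ Z', if y ≠ y', s₂ relates y to z and s₂ relates y' to z, then z lies in the domain of s₃; (2) for all y ∈ Y' and z, z' ∈ Z', if z ≠ z', s₂ relates y to z and s₂ relates y to z', then y lies in the codomain of s₁. -/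
open CategoryTheory

universe u

/-- A relation from `X` to `Y`. -/
abbrev Rel' (X Y : Type u) : Type u := X → Y → Prop

/-- Composite `s ⋅ r` of `r : X ⇸ Y` and `s : Y ⇸ Z`. -/
def relComp {X Y Z : Type u} (s : Rel' Y Z) (r : Rel' X Y) : Rel' X Z :=
  fun x z => ∃ y, r x y ∧ s y z

/-- Converse relation `r°`. -/
def relConv {X Y : Type u} (r : Rel' X Y) : Rel' Y X := fun y x => r x y

/-- Identity relation `1_X`. -/
def relId (X : Type u) : Rel' X X := fun x y => x = y

/-- The graph relation of a function. -/
def graphRel {X Y : Type u} (f : X → Y) : Rel' X Y := fun x y => f x = y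

/-- Pointwise order `r ≤ r'` on relations. -/
def relLe {X Y : Type u} (r r' : Rel' X Y) : Prop := ∀ x y, r x y → r' x y

/-- A relation is total if every `x` is related to some `y`. -/
def relTotal {X Y : Type u} (r : Rel' X Y) : Prop := ∀ x, ∃ y, r x y

/-- A relation is surjective if every `y` is related to some `x`. -/
def relSurj {X Y : Type u} (r : Rel' X Y) : Prop := ∀ y, ∃ x, r x y

/-- A lax extension of a `Set`-functor `F`. -/
structure LaxExt (F : Type u ⥤ Type u) : Type (u + 1) where
  ext : ∀ {X Y : Type u}, Rel' X Y → Rel' (F.obj X) (F.obj Y)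
  mono : ∀ {X Y : Type u} (r r' : Rel' X Y), relLe r r' → relLe (ext r) (ext r')
  lcomp : ∀ {X Y Z : Type u} (r : Rel' X Y) (s : Rel' Y Z),
    relLe (relComp (ext s) (ext r)) (ext (relComp s r))
  mapLe : ∀ {X Y : Type u} (f : X → Y), relLe (graphRel (F.map (TypeCat.ofHom f))) (ext (graphRel f))
  mapConvLe : ∀ {X Y : Type u} (f : X → Y),
    relLe (relConv (graphRel (F.map (TypeCat.ofHom f)))) (ext (relConv (graphRel f)))

/-- A relax extension of a `Set`-functor `F` (a lax extension without (L2)). -/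
structure RelaxExt (F : Type u ⥤ Type u) : Type (u + 1) where
  ext : ∀ {X Y : Type u}, Rel' X Y → Rel' (F.obj X) (F.obj Y)
  mono : ∀ {X Y : Type u} (r r' : Rel' X Y), relLe r r' → relLe (ext r) (ext r')
  mapLe : ∀ {X Y : Type u} (f : X → Y), relLe (graphRel (F.map (TypeCat.ofHom f))) (ext (graphRel f))
  mapConvLe : ∀ {X Y : Type u} (f : X → Y),
    relLe (relConv (graphRel (F.map (TypeCat.ofHom f)))) (ext (relConv (graphRel f)))

/-- Normality (identity-preservation) of a lax extension. -/
def LaxExt.IsNormal {F : Type u ⥤ Type u} (L : LaxExt F) : Prop :=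
  ∀ X : Type u, L.ext (relId X) = relId (F.obj X)

/-- The Barr lifting of a relation along a functor, computed from the canonical span. -/
def BarrLift (F : Type u ⥤ Type u) {X Y : Type u} (r : Rel' X Y) :
    Rel' (F.obj X) (F.obj Y) :=
  fun a b => ∃ t : F.obj {p : X × Y // r p.1 p.2},
    F.map (TypeCat.ofHom (fun p : {p : X × Y // r p.1 p.2} => p.1.1)) t = a ∧
    F.map (TypeCat.ofHom (fun p : {p : X × Y // r p.1 p.2} => p.1.2)) t = b

/-- A commutative square of functions that is a pullback. -/
def IsPBSquare {P X Y Z : Type u} (p₁ : P → X) (p₂ : P → Y) (f : X → Z) (g : Y → Z) : Prop :=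
  (∀ p, f (p₁ p) = g (p₂ p)) ∧ ∀ x y, f x = g y → ∃! p, p₁ p = x ∧ p₂ p = y

/-- A commutative square of functions that is a weak pullback. -/
def IsWeakPBSquare {P X Y Z : Type u} (p₁ : P → X) (p₂ : P → Y) (f : X → Z) (g : Y → Z) : Prop :=
  (∀ p, f (p₁ p) = g (p₂ p)) ∧ ∀ x y, f x = g y → ∃ p, p₁ p = x ∧ p₂ p = y

/-- `F` preserves 1/4-iso pullbacks. -/
def Preserves14IsoPullbacks (F : Type u ⥤ Type u) : Prop :=
  ∀ (P X Y Z : Type u) (p₁ : P → X) (p₂ : P → Y) (f : X → Z) (g : Y → Z),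
    Function.Bijective p₂ → IsPBSquare p₁ p₂ f g →
      IsPBSquare (F.map (TypeCat.ofHom p₁)) (F.map (TypeCat.ofHom p₂)) (F.map (TypeCat.ofHom f))
        (F.map (TypeCat.ofHom g))

/-- `F` preserves 1/4-iso 2/4-mono pullbacks. -/
def Preserves14Iso24MonoPullbacks (F : Type u ⥤ Type u) : Prop :=
  ∀ (P X Y Z : Type u) (p₁ : P → X) (p₂ : P → Y) (f : X → Z) (g : Y → Z),
    Function.Bijective p₂ → Function.Injective p₁ → Function.Injective g →
      IsPBSquare p₁ p₂ f g →
      IsPBSquare (F.map (TypeCat.ofHom p₁)) (F.map (TypeCat.ofHom p₂)) (F.map (TypeCat.ofHom f))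
        (F.map (TypeCat.ofHom g))

/-- `F` preserves 1/4-mono pullbacks. -/
def Preserves14MonoPullbacks (F : Type u ⥤ Type u) : Prop :=
  ∀ (P X Y Z : Type u) (p₁ : P → X) (p₂ : P → Y) (f : X → Z) (g : Y → Z),
    Function.Injective p₁ → IsPBSquare p₁ p₂ f g →
      IsPBSquare (F.map (TypeCat.ofHom p₁)) (F.map (TypeCat.ofHom p₂)) (F.map (TypeCat.ofHom f))
        (F.map (TypeCat.ofHom g))

/-- `F` preserves inverse images. -/
def PreservesInverseImages (F : Type u ⥤ Type u) : Prop :=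
  ∀ (P X Y Z : Type u) (p₁ : P → X) (p₂ : P → Y) (f : X → Z) (g : Y → Z),
    Function.Injective p₁ → Function.Injective g → IsPBSquare p₁ p₂ f g →
      IsPBSquare (F.map (TypeCat.ofHom p₁)) (F.map (TypeCat.ofHom p₂)) (F.map (TypeCat.ofHom f))
        (F.map (TypeCat.ofHom g))

/-- `F` weakly preserves 4/4-epi pullbacks. -/
def WeaklyPreserves44EpiPullbacks (F : Type u ⥤ Type u) : Prop :=
  ∀ (P X Y Z : Type u) (p₁ : P → X) (p₂ : P → Y) (f : X → Z) (g : Y → Z),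
    Function.Surjective p₁ → Function.Surjective p₂ →
    Function.Surjective f → Function.Surjective g →
    IsPBSquare p₁ p₂ f g →
      IsWeakPBSquare (F.map (TypeCat.ofHom p₁)) (F.map (TypeCat.ofHom p₂)) (F.map (TypeCat.ofHom f))
        (F.map (TypeCat.ofHom g))

/-- A (nonempty) composable sequence of relations from `X` to `Z`. -/
inductive RelChain : Type u → Type u → Type (u + 1)
  | single : ∀ {X Y : Type u}, Rel' X Y → RelChain X Y
  | cons : ∀ {X Y Z : Type u}, Rel' X Y → RelChain Y Z → RelChain X Z

/-- Composite of a composable sequence of relations (first relation applied first). -/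
def RelChain.comp : ∀ {X Z : Type u}, RelChain X Z → Rel' X Z
  | _, _, .single r => r
  | _, _, .cons r c => relComp (RelChain.comp c) r

/-- Composite of the Barr liftings of a composable sequence of relations. -/
def RelChain.barr (F : Type u ⥤ Type u) : ∀ {X Z : Type u}, RelChain X Z → Rel' (F.obj X) (F.obj Z)
  | _, _, .single r => BarrLift F r
  | _, _, .cons r c => relComp (RelChain.barr F c) (BarrLift F r)

/-- Length (number of relations) of a composable sequence. -/
def RelChain.length : ∀ {X Z : Type u}, RelChain X Z → ℕ
  | _, _, .single _ => 1
  | _, _, .cons _ c => RelChain.length c + 1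

/-- All relations in a composable sequence are total and surjective. -/
def RelChain.allTS : ∀ {X Z : Type u}, RelChain X Z → Prop
  | _, _, .single r => relTotal r ∧ relSurj r
  | _, _, .cons r c => (relTotal r ∧ relSurj r) ∧ RelChain.allTS c

/-- All relations in a composable sequence except the last one are total and surjective. -/
def RelChain.initTS : ∀ {X Z : Type u}, RelChain X Z → Prop
  | _, _, .single _ => True
  | _, _, .cons r c => (relTotal r ∧ relSurj r) ∧ RelChain.initTS c

/-- Composite of the images of a composable sequence of relations under an assignment `R`. -/
def RelChain.lift (F : Type u ⥤ Type u)
    (R : ∀ {X Y : Type u}, Rel' X Y → Rel' (F.obj X) (F.obj Y)) :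
    ∀ {X Z : Type u}, RelChain X Z → Rel' (F.obj X) (F.obj Z)
  | _, _, .single r => R r
  | _, _, .cons r c => relComp (RelChain.lift F (fun {_ _} s => R s) c) (R r)

/-- `r ⋅ (r° ⋅ r)ⁿ`. -/
def dfPow {X Y : Type u} (r : Rel' X Y) : ℕ → Rel' X Y
  | 0 => r
  | n + 1 => relComp (dfPow r n) (relComp (relConv r) r)

/-- The difunctional closure `r̂ = ⋁ₙ r ⋅ (r° ⋅ r)ⁿ` of a relation. -/
def difunClosure {X Y : Type u} (r : Rel' X Y) : Rel' X Y :=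
  fun x y => ∃ n : ℕ, dfPow r n x y

section AuxStmt13

/-- The span of a relation, matching the subtype used in `BarrLift`. -/
abbrev Sp13 {X Y : Type u} (r : Rel' X Y) : Type u := {p : X × Y // r p.1 p.2}

/-- Helper: composing two `F.map`s. -/
lemma map_map13 {F : Type u ⥤ Type u} {X Y Z : Type u} (f : X → Y) (g : Y → Z) (k : X → Z)
    (hk : ∀ x, g (f x) = k x) (t : F.obj X) :
    F.map (TypeCat.ofHom g) (F.map (TypeCat.ofHom f) t) = F.map (TypeCat.ofHom k) t := by
  have hfg : (fun x => g (f x)) = k := funext hk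
  rw [← hfg]
  exact (FunctorToTypes.map_comp_apply F (TypeCat.ofHom f) (TypeCat.ofHom g) t).symm

/-- Key consequence of preservation of 1/4-iso pullbacks: a transfer principle. -/
lemma transfer13 {F : Type u ⥤ Type u} (h : Preserves14IsoPullbacks F)
    {C D E : Type u} (j : C → D) (πD : D → E) (g : C → E)
    (hcomm : ∀ c, πD (j c) = g c)
    (huniq : ∀ d c, πD d = g c → j c = d)
    (x : F.obj D) (u : F.obj C) (hx : F.map (TypeCat.ofHom πD) x = F.map (TypeCat.ofHom g) u) :
    F.map (TypeCat.ofHom j) u = x := by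
  have hpb : IsPBSquare j (id : C → C) πD g := by
    refine ⟨fun c => hcomm c, fun d c hdc => ⟨c, ⟨huniq d c hdc, rfl⟩, ?_⟩⟩
    rintro q ⟨-, hq⟩
    exact hq
  have hF := h C D C E j id πD g Function.bijective_id hpb
  obtain ⟨p, ⟨hp1, hp2⟩, -⟩ := hF.2 x u hx
  have hid : (F.map (TypeCat.ofHom (id : C → C)) : F.obj C → F.obj C) = id :=
    funext fun v => FunctorToTypes.map_id_apply F v
  rw [hid] at hp2
  simp only [id_eq] at hp2
  subst hp2
  exact hp1

variable {X Y Z W : Type u} (r₁ : Rel' X Y) (r₂ : Rel' Y Z) (r₃ : Rel' Z W)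

/-- The left modified middle object: collapse pairs over `Y` on the codomain of `r₁`. -/
def AY13 : Type u := {p : Sp13 r₂ // ¬ ∃ x, r₁ x p.1.1} ⊕ {y : Y // ∃ x, r₁ x y}

/-- The right modified middle object: collapse pairs over `Z` on the domain of `r₃`. -/
def BZ13 : Type u := {p : Sp13 r₂ // ¬ ∃ w, r₃ p.1.2 w} ⊕ {z : Z // ∃ w, r₃ z w}

noncomputable def eA13 : Sp13 r₂ → AY13 r₁ r₂ := fun p =>
  @dite _ (∃ x, r₁ x p.1.1) (Classical.propDecidable _)
    (fun h => Sum.inr ⟨p.1.1, h⟩) (fun h => Sum.inl ⟨p, h⟩)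

noncomputable def eB13 : Sp13 r₂ → BZ13 r₂ r₃ := fun p =>
  @dite _ (∃ w, r₃ p.1.2 w) (Classical.propDecidable _)
    (fun h => Sum.inr ⟨p.1.2, h⟩) (fun h => Sum.inl ⟨p, h⟩)

lemma eA13_pos (p : Sp13 r₂) (h : ∃ x, r₁ x p.1.1) :
    eA13 r₁ r₂ p = Sum.inr ⟨p.1.1, h⟩ := by unfold eA13; exact dif_pos h

lemma eA13_neg (p : Sp13 r₂) (h : ¬ ∃ x, r₁ x p.1.1) :
    eA13 r₁ r₂ p = Sum.inl ⟨p, h⟩ := by unfold eA13; exact dif_neg h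

lemma eB13_pos (p : Sp13 r₂) (h : ∃ w, r₃ p.1.2 w) :
    eB13 r₂ r₃ p = Sum.inr ⟨p.1.2, h⟩ := by unfold eB13; exact dif_pos h

lemma eB13_neg (p : Sp13 r₂) (h : ¬ ∃ w, r₃ p.1.2 w) :
    eB13 r₂ r₃ p = Sum.inl ⟨p, h⟩ := by unfold eB13; exact dif_neg h

def piA13 : AY13 r₁ r₂ → Y := Sum.elim (fun p => p.1.1.1) (fun y => y.1)

def piB13 : BZ13 r₂ r₃ → Z := Sum.elim (fun p => p.1.1.2) (fun z => z.1)

lemma piA_eA13 (p : Sp13 r₂) : piA13 r₁ r₂ (eA13 r₁ r₂ p) = p.1.1 := by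
  by_cases h : ∃ x, r₁ x p.1.1
  · rw [eA13_pos r₁ r₂ p h]; rfl
  · rw [eA13_neg r₁ r₂ p h]; rfl

lemma piB_eB13 (p : Sp13 r₂) : piB13 r₂ r₃ (eB13 r₂ r₃ p) = p.1.2 := by
  by_cases h : ∃ w, r₃ p.1.2 w
  · rw [eB13_pos r₂ r₃ p h]; rfl
  · rw [eB13_neg r₂ r₃ p h]; rfl

def s113 : Rel' X (AY13 r₁ r₂) := fun x a =>
  match a with
  | Sum.inl _ => False
  | Sum.inr y => r₁ x y.1

def s213 : Rel' (AY13 r₁ r₂) (BZ13 r₂ r₃) := fun a b =>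
  ∃ p, eA13 r₁ r₂ p = a ∧ eB13 r₂ r₃ p = b

def s313 : Rel' (BZ13 r₂ r₃) W := fun b w =>
  match b with
  | Sum.inl _ => False
  | Sum.inr z => r₃ z.1 w

end AuxStmt13

/-- For a functor preserving 1/4-iso pullbacks, every composable triple of relations has a
Barr upper bound `s₁, s₂, s₃` satisfying the two splitting conditions. -/
theorem stmt13 (F : Type u ⥤ Type u) (h : Preserves14IsoPullbacks F)
    (X Y Z W : Type u) (r₁ : Rel' X Y) (r₂ : Rel' Y Z) (r₃ : Rel' Z W) :
    ∃ (Y' Z' : Type u) (s₁ : Rel' X Y') (s₂ : Rel' Y' Z') (s₃ : Rel' Z' W),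
      relComp s₃ (relComp s₂ s₁) = relComp r₃ (relComp r₂ r₁) ∧
      relLe (relComp (BarrLift F r₃) (relComp (BarrLift F r₂) (BarrLift F r₁)))
        (relComp (BarrLift F s₃) (relComp (BarrLift F s₂) (BarrLift F s₁))) ∧
      (∀ (y y' : Y') (z : Z'), y ≠ y' → s₂ y z → s₂ y' z → ∃ w, s₃ z w) ∧
      (∀ (y : Y') (z z' : Z'), z ≠ z' → s₂ y z → s₂ y z' → ∃ x, s₁ x y) := by
  classical
  refine ⟨AY13 r₁ r₂, BZ13 r₂ r₃, s113 r₁ r₂, s213 r₁ r₂ r₃, s313 r₂ r₃, ?_, ?_, ?_, ?_⟩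
  · -- composite equality
    funext x w
    apply propext
    constructor
    · rintro ⟨b, ⟨a, h1, p, hpa, hpb⟩, h3⟩
      rcases a with q | y
      · exact h1.elim
      · -- h1 : r₁ x y.1
        by_cases hc : ∃ x', r₁ x' p.1.1
        · rw [eA13_pos r₁ r₂ p hc] at hpa
          have hy : p.1.1 = y.1 := by
            have := Sum.inr.inj hpa
            exact congrArg Subtype.val this
          by_cases hd : ∃ w', r₃ p.1.2 w'
          · rw [eB13_pos r₂ r₃ p hd] at hpb
            subst hpb
            exact ⟨p.1.2, ⟨p.1.1, hy ▸ h1, p.2⟩, h3⟩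
          · rw [eB13_neg r₂ r₃ p hd] at hpb
            subst hpb
            exact h3.elim
        · rw [eA13_neg r₁ r₂ p hc] at hpa
          exact absurd hpa (by simp)
    · rintro ⟨z, ⟨y, hxy, hyz⟩, hzw⟩
      refine ⟨eB13 r₂ r₃ ⟨(y, z), hyz⟩, ⟨Sum.inr ⟨y, ⟨x, hxy⟩⟩, hxy, ⟨(y, z), hyz⟩,
        ?_, rfl⟩, ?_⟩
      · exact eA13_pos r₁ r₂ ⟨(y, z), hyz⟩ ⟨x, hxy⟩
      · rw [eB13_pos r₂ r₃ ⟨(y, z), hyz⟩ ⟨w, hzw⟩]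
        exact hzw
  · -- Barr inequality
    intro a d had
    obtain ⟨c, ⟨b, ⟨u1, hu1a, hu1b⟩, ⟨t, htb, htc⟩⟩, u3, hu3c, hu3d⟩ := had
    set jA : Sp13 r₁ → AY13 r₁ r₂ := fun p => Sum.inr ⟨p.1.2, ⟨p.1.1, p.2⟩⟩ with hjA
    set jB : Sp13 r₃ → BZ13 r₂ r₃ := fun p => Sum.inr ⟨p.1.1, ⟨p.1.2, p.2⟩⟩ with hjB
    have hE1 : F.map (TypeCat.ofHom jA) u1 = F.map (TypeCat.ofHom (eA13 r₁ r₂)) t := by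
      refine transfer13 h jA (piA13 r₁ r₂) (fun p => p.1.2) (fun p => rfl) ?_ _ _ ?_
      · rintro (q | y) p hdc
        · exfalso
          apply q.2
          have hdc' : (q.1 : Sp13 r₂).1.1 = p.1.2 := hdc
          rw [hdc']
          exact ⟨p.1.1, p.2⟩
        · obtain ⟨y, hy⟩ := y
          have : (y : Y) = p.1.2 := hdc
          subst this
          rfl
      · have h1 : F.map (TypeCat.ofHom (piA13 r₁ r₂)) (F.map (TypeCat.ofHom (eA13 r₁ r₂)) t) =
            F.map (TypeCat.ofHom (fun p : Sp13 r₂ => p.1.1)) t :=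
          map_map13 _ _ _ (fun p => piA_eA13 r₁ r₂ p) t
        rw [h1, htb, ← hu1b]
    have hE2 : F.map (TypeCat.ofHom jB) u3 = F.map (TypeCat.ofHom (eB13 r₂ r₃)) t := by
      refine transfer13 h jB (piB13 r₂ r₃) (fun p => p.1.1) (fun p => rfl) ?_ _ _ ?_
      · rintro (q | z) p hdc
        · exfalso
          apply q.2
          have hdc' : (q.1 : Sp13 r₂).1.2 = p.1.1 := hdc
          rw [hdc']
          exact ⟨p.1.2, p.2⟩
        · obtain ⟨z, hz⟩ := z
          have : (z : Z) = p.1.1 := hdc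
          subst this
          rfl
      · have h1 : F.map (TypeCat.ofHom (piB13 r₂ r₃)) (F.map (TypeCat.ofHom (eB13 r₂ r₃)) t) =
            F.map (TypeCat.ofHom (fun p : Sp13 r₂ => p.1.2)) t :=
          map_map13 _ _ _ (fun p => piB_eB13 r₂ r₃ p) t
        rw [h1, htc, ← hu3c]
    set jS1 : Sp13 r₁ → {q : X × AY13 r₁ r₂ // s113 r₁ r₂ q.1 q.2} :=
      fun p => ⟨(p.1.1, jA p), p.2⟩ with hjS1
    set mu : Sp13 r₂ → {q : AY13 r₁ r₂ × BZ13 r₂ r₃ // s213 r₁ r₂ r₃ q.1 q.2} :=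
      fun p => ⟨(eA13 r₁ r₂ p, eB13 r₂ r₃ p), ⟨p, rfl, rfl⟩⟩ with hmu
    set jS3 : Sp13 r₃ → {q : BZ13 r₂ r₃ × W // s313 r₂ r₃ q.1 q.2} :=
      fun p => ⟨(jB p, p.1.2), p.2⟩ with hjS3
    refine ⟨F.map (TypeCat.ofHom (eB13 r₂ r₃)) t, ⟨F.map (TypeCat.ofHom (eA13 r₁ r₂)) t,
      ⟨F.map (TypeCat.ofHom jS1) u1, ?_, ?_⟩, ⟨F.map (TypeCat.ofHom mu) t, ?_, ?_⟩⟩, ⟨F.map (TypeCat.ofHom jS3) u3, ?_, ?_⟩⟩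
    · exact (map_map13 jS1 _ (fun p : Sp13 r₁ => p.1.1) (fun p => rfl) u1).trans hu1a
    · exact (map_map13 jS1 _ jA (fun p => rfl) u1).trans hE1
    · exact map_map13 mu _ (eA13 r₁ r₂) (fun p => rfl) t
    · exact map_map13 mu _ (eB13 r₂ r₃) (fun p => rfl) t
    · exact (map_map13 jS3 _ jB (fun p => rfl) u3).trans hE2
    · exact (map_map13 jS3 _ (fun p : Sp13 r₃ => p.1.2) (fun p => rfl) u3).trans hu3d
  · -- condition (1)
    rintro a a' z hne ⟨p, hpa, hpz⟩ ⟨p', hpa', hpz'⟩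
    rcases z with q | z0
    · exfalso
      apply hne
      have hp : p = q.1 := by
        by_cases hd : ∃ w', r₃ p.1.2 w'
        · rw [eB13_pos r₂ r₃ p hd] at hpz; exact absurd hpz (by simp)
        · rw [eB13_neg r₂ r₃ p hd] at hpz
          exact congrArg Subtype.val (Sum.inl.inj hpz)
      have hp' : p' = q.1 := by
        by_cases hd : ∃ w', r₃ p'.1.2 w'
        · rw [eB13_pos r₂ r₃ p' hd] at hpz'; exact absurd hpz' (by simp)
        · rw [eB13_neg r₂ r₃ p' hd] at hpz'
          exact congrArg Subtype.val (Sum.inl.inj hpz')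
      rw [← hpa, ← hpa', hp, hp']
    · obtain ⟨w, hw⟩ := z0.2
      exact ⟨w, hw⟩
  · -- condition (2)
    rintro a z z' hne ⟨p, hpa, hpz⟩ ⟨p', hpa', hpz'⟩
    rcases a with q | y0
    · exfalso
      apply hne
      have hp : p = q.1 := by
        by_cases hc : ∃ x', r₁ x' p.1.1
        · rw [eA13_pos r₁ r₂ p hc] at hpa; exact absurd hpa (by simp)
        · rw [eA13_neg r₁ r₂ p hc] at hpa
          exact congrArg Subtype.val (Sum.inl.inj hpa)
      have hp' : p' = q.1 := by
        by_cases hc : ∃ x', r₁ x' p'.1.1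
        · rw [eA13_pos r₁ r₂ p' hc] at hpa'; exact absurd hpa' (by simp)
        · rw [eA13_neg r₁ r₂ p' hc] at hpa'
          exact congrArg Subtype.val (Sum.inl.inj hpa')
      rw [← hpz, ← hpz', hp, hp']
    · obtain ⟨x, hx⟩ := y0.2
      exact ⟨x, hx⟩
end

section
/- Let F be a Set-functor that preserves 1/4-iso pullbacks. Then F admits a normal lax extension if and only if for every composable sequence of relations r₁, …, rₙ with n ≥ 4 such that r₂, …, rₙ₋₁ are total and surjective, whenever rₙ ⋅ … ⋅ r₁ = 1_X for some set X, then F̄rₙ ⋅ … ⋅ F̄r₁ ≤ 1_{F X}, where F̄ denotes the Barr lifting of F. -/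
open CategoryTheory

universe u

namespace Stmt14Aux

variable (F : Type u ⥤ Type u)

lemma map_map {A B C : Type u} (f : A → B) (g : B → C) (a : F.obj A) :
    F.map (TypeCat.ofHom g) (F.map (TypeCat.ofHom f) a) = F.map (TypeCat.ofHom (fun x => g (f x))) a :=
  (FunctorToTypes.map_comp_apply F (TypeCat.ofHom f) (TypeCat.ofHom g) a).symm

lemma map_id' {A : Type u} (a : F.obj A) : F.map (TypeCat.ofHom (fun x : A => x)) a = a :=
  FunctorToTypes.map_id_apply F a

lemma barr_map {A B A' B' : Type u} (u : A → A') (v : B → B') {s : Rel' A B} {s' : Rel' A' B'}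
    (hs : ∀ a b, s a b → s' (u a) (v b)) {a : F.obj A} {b : F.obj B}
    (h : BarrLift F s a b) : BarrLift F s' (F.map (TypeCat.ofHom u) a) (F.map (TypeCat.ofHom v) b) := by
  obtain ⟨t, h1, h2⟩ := h
  refine ⟨F.map (TypeCat.ofHom (fun p : {p : A × B // s p.1 p.2} =>
      (⟨(u p.1.1, v p.1.2), hs _ _ p.2⟩ : {p : A' × B' // s' p.1 p.2}))) t, ?_, ?_⟩
  · calc F.map (TypeCat.ofHom (fun p : {p : A' × B' // s' p.1 p.2} => p.1.1)) (F.map (TypeCat.ofHom _) t)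
        = F.map (TypeCat.ofHom (fun p : {p : A × B // s p.1 p.2} => u p.1.1)) t := map_map F _ _ t
      _ = F.map (TypeCat.ofHom u) (F.map (TypeCat.ofHom (fun p : {p : A × B // s p.1 p.2} => p.1.1)) t) := (map_map F _ _ t).symm
      _ = F.map (TypeCat.ofHom u) a := by rw [h1]
  · calc F.map (TypeCat.ofHom (fun p : {p : A' × B' // s' p.1 p.2} => p.1.2)) (F.map (TypeCat.ofHom _) t)
        = F.map (TypeCat.ofHom (fun p : {p : A × B // s p.1 p.2} => v p.1.2)) t := map_map F _ _ t
      _ = F.map (TypeCat.ofHom v) (F.map (TypeCat.ofHom (fun p : {p : A × B // s p.1 p.2} => p.1.2)) t) := (map_map F _ _ t).symm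
      _ = F.map (TypeCat.ofHom v) b := by rw [h2]

lemma barr_mapL {A B A' : Type u} (u : A → A') {s : Rel' A B} {s' : Rel' A' B}
    (hs : ∀ a b, s a b → s' (u a) b) {a : F.obj A} {b : F.obj B}
    (h : BarrLift F s a b) : BarrLift F s' (F.map (TypeCat.ofHom u) a) b := by
  have := barr_map F u (fun x => x) hs h
  rwa [map_id'] at this

lemma barr_mapR {A B B' : Type u} (v : B → B') {s : Rel' A B} {s' : Rel' A B'}
    (hs : ∀ a b, s a b → s' a (v b)) {a : F.obj A} {b : F.obj B}
    (h : BarrLift F s a b) : BarrLift F s' a (F.map (TypeCat.ofHom v) b) := by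
  have := barr_map F (fun x => x) v hs h
  rwa [map_id'] at this

lemma barrId_refl {X : Type u} (a : F.obj X) : BarrLift F (relId X) a a := by
  refine ⟨F.map (TypeCat.ofHom (fun x : X => (⟨(x, x), rfl⟩ : {p : X × X // relId X p.1 p.2}))) a, ?_, ?_⟩
  · rw [map_map]; exact map_id' F a
  · rw [map_map]; exact map_id' F a

lemma barr_id_le {X : Type u} {a b : F.obj X} (h : BarrLift F (relId X) a b) : a = b := by
  obtain ⟨t, h1, h2⟩ := h
  have : (fun p : {p : X × X // relId X p.1 p.2} => p.1.1)
       = (fun p : {p : X × X // relId X p.1 p.2} => p.1.2) := funext fun p => p.2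
  rw [← h1, ← h2, this]

/-! ### Forward direction -/

lemma barr_le_ext (L : LaxExt F) {A B : Type u} (r : Rel' A B) :
    relLe (BarrLift F r) (L.ext r) := by
  intro a b h
  obtain ⟨t, h1, h2⟩ := h
  refine L.mono (relComp (graphRel (fun p : {p : A × B // r p.1 p.2} => p.1.2))
      (relConv (graphRel (fun p : {p : A × B // r p.1 p.2} => p.1.1)))) r ?_ a b ?_
  · rintro x y ⟨p, hp1, hp2⟩
    have hp : r ((fun q : {p : A × B // r p.1 p.2} => q.1.1) p)
        ((fun q : {p : A × B // r p.1 p.2} => q.1.2) p) := p.2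
    rw [hp1, hp2] at hp
    exact hp
  · apply L.lcomp
    have h1' : relConv (graphRel (F.map (TypeCat.ofHom (fun p : {p : A × B // r p.1 p.2} => p.1.1)))) a t := h1
    have h2' : graphRel (F.map (TypeCat.ofHom (fun p : {p : A × B // r p.1 p.2} => p.1.2))) t b := h2
    exact ⟨t, L.mapConvLe _ a t h1', L.mapLe _ t b h2'⟩

lemma chain_barr_le_ext (L : LaxExt F) :
    ∀ {A B : Type u} (c : RelChain A B), relLe (RelChain.barr F c) (L.ext (RelChain.comp c)) := by
  intro A B c
  induction c with
  | single r => exact barr_le_ext F L r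
  | cons r c ih =>
    rintro a b ⟨m, h1, h2⟩
    exact L.lcomp r (RelChain.comp c) a b ⟨m, barr_le_ext F L r a m h1, ih m b h2⟩

/-! ### The candidate normal lax extension -/

def chainExt {X Y : Type u} (r : Rel' X Y) : Rel' (F.obj X) (F.obj Y) :=
  fun a b => ∃ c : RelChain X Y, relLe (RelChain.comp c) r ∧ RelChain.barr F c a b

def chainApp : ∀ {X Y Z : Type u}, RelChain X Y → RelChain Y Z → RelChain X Z
  | _, _, _, .single r, c => .cons r c
  | _, _, _, .cons r c₁, c₂ => .cons r (chainApp c₁ c₂)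

lemma comp_single {X Y : Type u} (r : Rel' X Y) :
    RelChain.comp (.single r) = r := rfl

lemma comp_cons {X Y Z : Type u} (r : Rel' X Y) (c : RelChain Y Z) :
    RelChain.comp (.cons r c) = relComp (RelChain.comp c) r := rfl

lemma barr_single {X Y : Type u} (r : Rel' X Y) :
    RelChain.barr F (.single r) = BarrLift F r := rfl

lemma barr_cons {X Y Z : Type u} (r : Rel' X Y) (c : RelChain Y Z) :
    RelChain.barr F (.cons r c) = relComp (RelChain.barr F c) (BarrLift F r) := rfl

lemma chainApp_comp : ∀ {X Y Z : Type u} (c₁ : RelChain X Y) (c₂ : RelChain Y Z) (x : X) (z : Z),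
    RelChain.comp (chainApp c₁ c₂) x z → ∃ y, RelChain.comp c₁ x y ∧ RelChain.comp c₂ y z := by
  intro X Y Z c₁
  induction c₁ with
  | single r =>
    intro c₂ x z h
    simp only [chainApp, comp_cons, relComp] at h
    exact h
  | cons r c ih =>
    intro c₂ x z h
    simp only [chainApp, comp_cons, relComp] at h
    obtain ⟨w, hw, hrest⟩ := h
    obtain ⟨y, hy1, hy2⟩ := ih c₂ w z hrest
    exact ⟨y, ⟨w, hw, hy1⟩, hy2⟩

lemma chainApp_barr : ∀ {X Y Z : Type u} (c₁ : RelChain X Y) (c₂ : RelChain Y Z)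
    (a : F.obj X) (b : F.obj Z) (m : F.obj Y),
    RelChain.barr F c₁ a m → RelChain.barr F c₂ m b → RelChain.barr F (chainApp c₁ c₂) a b := by
  intro X Y Z c₁
  induction c₁ with
  | single r =>
    intro c₂ a b m h1 h2
    simp only [chainApp, barr_cons, relComp]
    exact ⟨m, h1, h2⟩
  | cons r c ih =>
    intro c₂ a b m h1 h2
    simp only [barr_cons, relComp] at h1
    obtain ⟨w, hw, hrest⟩ := h1
    simp only [chainApp, barr_cons, relComp]
    exact ⟨w, hw, ih c₂ w b m hrest h2⟩

/-! ### The priming construction -/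

inductive Tag : Type u
  | bot | top

def midRel {X Y Z : Type u} (s : Rel' Y Z) : Rel' (Y ⊕ (X ⊕ Tag.{u})) (Z ⊕ (X ⊕ Tag.{u})) :=
  fun w m =>
    match w, m with
    | .inl y, .inl z => s y z
    | .inl _, .inr (.inr .bot) => True
    | .inr (.inl x), .inr (.inl x') => x = x'
    | .inr (.inr .bot), .inr (.inr .bot) => True
    | .inr (.inr .top), .inl _ => True
    | .inr (.inr .top), .inr (.inr .top) => True
    | _, _ => False

def firstRel {X Y : Type u} (s : Rel' X Y) : Rel' X (Y ⊕ (X ⊕ Tag.{u})) :=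
  fun x m =>
    match m with
    | .inl y => s x y
    | .inr (.inl x') => x = x'
    | _ => False

def lastRel {X Y : Type u} (s : Rel' Y X) : Rel' (Y ⊕ (X ⊕ Tag.{u})) X :=
  fun w x =>
    match w with
    | .inl y => s y x
    | .inr (.inl x') => x' = x
    | _ => False

lemma midRel_total {X Y Z : Type u} (s : Rel' Y Z) : relTotal (midRel (X := X) s) := by
  rintro (y | x | _ | _)
  · exact ⟨.inr (.inr .bot), trivial⟩
  · exact ⟨.inr (.inl x), rfl⟩
  · exact ⟨.inr (.inr .bot), trivial⟩
  · exact ⟨.inr (.inr .top), trivial⟩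

lemma midRel_surj {X Y Z : Type u} (s : Rel' Y Z) : relSurj (midRel (X := X) s) := by
  rintro (z | x | _ | _)
  · exact ⟨.inr (.inr .top), trivial⟩
  · exact ⟨.inr (.inl x), rfl⟩
  · exact ⟨.inr (.inr .bot), trivial⟩
  · exact ⟨.inr (.inr .top), trivial⟩

def primeChain {X : Type u} : ∀ {Y : Type u}, RelChain Y X → RelChain (Y ⊕ (X ⊕ Tag.{u})) X
  | _, .single s => .single (lastRel s)
  | _, .cons s c => .cons (midRel s) (primeChain c)

lemma primeChain_length {X : Type u} :
    ∀ {Y : Type u} (c : RelChain Y X), RelChain.length (primeChain c) = RelChain.length c := by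
  intro Y c
  induction c with
  | single s => simp [primeChain, RelChain.length]
  | cons s c ih => simp only [primeChain, RelChain.length, ih]

lemma primeChain_initTS {X : Type u} :
    ∀ {Y : Type u} (c : RelChain Y X), RelChain.initTS (primeChain c) := by
  intro Y c
  induction c with
  | single s => simp [primeChain, RelChain.initTS]
  | cons s c ih =>
    simp only [primeChain, RelChain.initTS]
    exact ⟨⟨midRel_total s, midRel_surj s⟩, ih⟩

lemma primeChain_copy {X : Type u} :
    ∀ {Y : Type u} (c : RelChain Y X) (x : X),
      RelChain.comp (primeChain c) (.inr (.inl x)) x := by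
  intro Y c
  induction c with
  | single s =>
    intro x
    simp only [primeChain, comp_single]
    exact rfl
  | cons s c ih =>
    intro x
    simp only [primeChain, comp_cons, relComp]
    exact ⟨.inr (.inl x), rfl, ih x⟩

lemma primeChain_comp_inv {X : Type u} :
    ∀ {Y : Type u} (c : RelChain Y X) (w : Y ⊕ (X ⊕ Tag.{u})) (x' : X),
      RelChain.comp (primeChain c) w x' →
        (∃ y, w = .inl y ∧ RelChain.comp c y x') ∨ w = .inr (.inl x') ∨ w = .inr (.inr .top) := by
  intro Y c
  induction c with
  | single s =>
    intro w x' hw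
    simp only [primeChain, comp_single] at hw
    rcases w with y | x | _ | _
    · exact Or.inl ⟨y, rfl, hw⟩
    · exact Or.inr (Or.inl (by have e : x = x' := hw; subst e; rfl))
    · exact ((hw : False)).elim
    · exact ((hw : False)).elim
  | cons s c ih =>
    intro w x' hw
    simp only [primeChain, comp_cons, relComp] at hw
    obtain ⟨m, hm, hrest⟩ := hw
    rcases ih m x' hrest with ⟨z, rfl, hz⟩ | rfl | rfl
    · rcases w with y | x | _ | _
      · exact Or.inl ⟨y, rfl, z, hm, hz⟩
      · exact ((hm : False)).elim
      · exact ((hm : False)).elim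
      · exact Or.inr (Or.inr rfl)
    · rcases w with y | x | _ | _
      · exact ((hm : False)).elim
      · exact Or.inr (Or.inl (by have e : x = x' := hm; subst e; rfl))
      · exact ((hm : False)).elim
      · exact ((hm : False)).elim
    · rcases w with y | x | _ | _
      · exact ((hm : False)).elim
      · exact ((hm : False)).elim
      · exact ((hm : False)).elim
      · exact Or.inr (Or.inr rfl)

lemma primeChain_barr {X : Type u} :
    ∀ {Y : Type u} (c : RelChain Y X) (a : F.obj Y) (b : F.obj X),
      RelChain.barr F c a b → RelChain.barr F (primeChain c) (F.map (TypeCat.ofHom Sum.inl) a) b := by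
  intro Y c
  induction c with
  | single s =>
    intro a b hab
    simp only [barr_single] at hab
    simp only [primeChain, barr_single]
    exact barr_mapL F Sum.inl (fun y x h => h) hab
  | cons s c ih =>
    intro a b hab
    simp only [barr_cons, relComp] at hab
    obtain ⟨m, h1, h2⟩ := hab
    simp only [primeChain, barr_cons, relComp]
    exact ⟨F.map (TypeCat.ofHom Sum.inl) m, barr_map F Sum.inl Sum.inl (fun y z h => h) h1, ih m b h2⟩

lemma chain_length_pos : ∀ {X Y : Type u} (c : RelChain X Y), 1 ≤ RelChain.length c := by
  intro X Y c
  cases c with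
  | single r => exact le_refl 1
  | cons r c => exact Nat.le_add_left 1 _

/-- The key normality bound: chains with subidentity composite have subidentity
Barr composite, given the hypothesis of the theorem. -/
lemma key (H : ∀ (X Y : Type u) (r₁ : Rel' X Y) (c : RelChain Y X),
      3 ≤ RelChain.length c → RelChain.initTS c →
      RelChain.comp (RelChain.cons r₁ c) = relId X →
      relLe (RelChain.barr F (RelChain.cons r₁ c)) (relId (F.obj X)))
    {X : Type u} (c₀ : RelChain X X) (hle : relLe (RelChain.comp c₀) (relId X)) :
    relLe (RelChain.barr F c₀) (relId (F.obj X)) := by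
  intro a b hb
  set crest : RelChain X X := .cons (relId X) (.cons (relId X) c₀) with hcrest
  have hlen : 3 ≤ RelChain.length (primeChain (X := X) crest) := by
    rw [primeChain_length]
    have h1 := chain_length_pos c₀
    simp only [hcrest, RelChain.length]
    omega
  have hcomp : RelChain.comp (RelChain.cons (firstRel (relId X)) (primeChain (X := X) crest))
      = relId X := by
    funext x x'
    apply propext
    constructor
    · intro hcc
      simp only [comp_cons, relComp] at hcc
      obtain ⟨w, hw, hc⟩ := hcc
      rcases primeChain_comp_inv crest w x' hc with ⟨y, rfl, hy⟩ | rfl | rfl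
      · have hxy : x = y := hw
        subst hxy
        simp only [hcrest, comp_cons, relComp] at hy
        obtain ⟨y1, h01, y2, h12, h2⟩ := hy
        have e1 : x = y1 := h01
        subst e1
        have e2 : x = y2 := h12
        subst e2
        exact hle x x' h2
      · exact hw
      · exact ((hw : False)).elim
    · intro hxx
      have hxx' : x = x' := hxx
      subst hxx'
      simp only [comp_cons, relComp]
      exact ⟨.inr (.inl x), rfl, primeChain_copy crest x⟩
  have hcrest_barr : RelChain.barr F crest a b := by
    simp only [hcrest, barr_cons, relComp]
    exact ⟨a, barrId_refl F a, a, barrId_refl F a, hb⟩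
  have hbarr : RelChain.barr F (RelChain.cons (firstRel (relId X)) (primeChain (X := X) crest))
      a b := by
    simp only [barr_cons, relComp]
    exact ⟨F.map (TypeCat.ofHom Sum.inl) a, barr_mapR F Sum.inl (fun x y hh => hh) (barrId_refl F a),
      primeChain_barr F crest a b hcrest_barr⟩
  exact H X _ (firstRel (relId X)) (primeChain crest) hlen (primeChain_initTS crest) hcomp a b hbarr

end Stmt14Aux


/-- A functor preserving 1/4-iso pullbacks admits a normal lax extension iff the
subidentity condition holds for all composable sequences of length at least `4` in which
all relations other than the first and the last are total and surjective. -/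
theorem stmt14 (F : Type u ⥤ Type u) (h : Preserves14IsoPullbacks F) :
    (∃ L : LaxExt F, L.IsNormal) ↔
      ∀ (X Y : Type u) (r₁ : Rel' X Y) (c : RelChain Y X),
        3 ≤ RelChain.length c → RelChain.initTS c →
        RelChain.comp (RelChain.cons r₁ c) = relId X →
        relLe (RelChain.barr F (RelChain.cons r₁ c)) (relId (F.obj X)) := by
  constructor
  · rintro ⟨L, hL⟩ X Y r₁ c _ _ hcomp a b hb
    have hx := Stmt14Aux.chain_barr_le_ext F L (RelChain.cons r₁ c) a b hb
    rwa [hcomp, hL X] at hx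
  · intro H
    refine ⟨⟨fun {X Y} r => Stmt14Aux.chainExt F r, ?_, ?_, ?_, ?_⟩, ?_⟩
    · rintro X Y r r' hrr' a b ⟨c, hc, hb⟩
      exact ⟨c, fun x y hxy => hrr' x y (hc x y hxy), hb⟩
    · rintro X Y Z r s a b ⟨m, ⟨c₁, hc₁, hb₁⟩, ⟨c₂, hc₂, hb₂⟩⟩
      refine ⟨Stmt14Aux.chainApp c₁ c₂, ?_, Stmt14Aux.chainApp_barr F c₁ c₂ a b m hb₁ hb₂⟩
      intro x z hxz
      obtain ⟨y, h1, h2⟩ := Stmt14Aux.chainApp_comp c₁ c₂ x z hxz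
      exact ⟨y, hc₁ x y h1, hc₂ y z h2⟩
    · intro X Y f a b hab
      refine ⟨RelChain.single (graphRel f), fun x y hxy => hxy, ?_⟩
      have hab' : F.map (TypeCat.ofHom f) a = b := hab
      simp only [Stmt14Aux.barr_single]
      rw [← hab']
      exact Stmt14Aux.barr_mapR F f (fun x y hh => congrArg f (hh : x = y))
        (Stmt14Aux.barrId_refl F a)
    · intro X Y f b a hab
      refine ⟨RelChain.single (relConv (graphRel f)), fun y x hxy => hxy, ?_⟩
      have hab' : F.map (TypeCat.ofHom f) a = b := hab
      simp only [Stmt14Aux.barr_single]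
      rw [← hab']
      exact Stmt14Aux.barr_mapL F f (fun x y hh => (congrArg f (hh : x = y)).symm)
        (Stmt14Aux.barrId_refl F a)
    · intro X
      funext a b
      apply propext
      constructor
      · rintro ⟨c, hc, hb⟩
        exact Stmt14Aux.key F H c hc a b hb
      · intro hab
        have hab' : a = b := hab
        subst hab'
        exact ⟨RelChain.single (relId X), fun x y hxy => hxy, Stmt14Aux.barrId_refl F a⟩
end

section
/- A Set-functor F weakly preserves 4/4-epi pullbacks if and only if for all relations r : X ⇸ Y and s : Y ⇸ Z with r surjective and s total, one has F̄s ⋅ F̄r = F̄(s ⋅ r), where F̄ denotes the Barr lifting of F. -/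
open CategoryTheory

universe u

lemma fmapc (F : Type u ⥤ Type u) {X Y Z : Type u} (f : X → Y) (g : Y → Z) (t : F.obj X) :
    F.map (TypeCat.ofHom g) (F.map (TypeCat.ofHom f) t) = F.map (TypeCat.ofHom (fun x => g (f x))) t := by
  rw [← Functor.map_comp_apply]; rfl

lemma fmapid (F : Type u ⥤ Type u) {X : Type u} (t : F.obj X) :
    F.map (TypeCat.ofHom (fun x : X => x)) t = t := by
  change F.map (𝟙 X) t = t
  exact F.map_id_apply X t

/-- A Set-functor weakly preserves 4/4-epi pullbacks iff the Barr lifting is functorial on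
composites of a surjective relation followed by a total relation. -/
theorem stmt15 (F : Type u ⥤ Type u) :
    WeaklyPreserves44EpiPullbacks F ↔
      ∀ (X Y Z : Type u) (r : Rel' X Y) (s : Rel' Y Z),
        relSurj r → relTotal s →
        relComp (BarrLift F s) (BarrLift F r) = BarrLift F (relComp s r) := by
  constructor
  · -- forward direction
    intro hW X Y Z r s hr hs
    funext x z
    apply propext
    constructor
    · rintro ⟨b, ⟨tr, h1, h2⟩, ⟨ts, h3, h4⟩⟩
      -- the pullback of the cospan R → Y ← S
      let R := {p : X × Y // r p.1 p.2}
      let S := {p : Y × Z // s p.1 p.2}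
      let PP := {q : R × S // q.1.1.2 = q.2.1.1}
      have sq1 : Function.Surjective (fun q : PP => q.1.1) := by
        intro u
        obtain ⟨zz, hz⟩ := hs u.1.2
        exact ⟨⟨(u, ⟨(u.1.2, zz), hz⟩), rfl⟩, rfl⟩
      have sq2 : Function.Surjective (fun q : PP => q.1.2) := by
        intro v
        obtain ⟨xx, hx⟩ := hr v.1.1
        exact ⟨⟨(⟨(xx, v.1.1), hx⟩, v), rfl⟩, rfl⟩
      have sR : Function.Surjective (fun p : R => p.1.2) := by
        intro y
        obtain ⟨xx, hx⟩ := hr y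
        exact ⟨⟨(xx, y), hx⟩, rfl⟩
      have sS : Function.Surjective (fun p : S => p.1.1) := by
        intro y
        obtain ⟨zz, hz⟩ := hs y
        exact ⟨⟨(y, zz), hz⟩, rfl⟩
      have hPB : IsPBSquare (fun q : PP => q.1.1) (fun q : PP => q.1.2)
          (fun p : R => p.1.2) (fun p : S => p.1.1) := by
        refine ⟨fun q => q.2, fun u v h => ⟨⟨(u, v), h⟩, ⟨rfl, rfl⟩, ?_⟩⟩
        rintro ⟨⟨qa, qb⟩, hq⟩ ⟨e1, e2⟩
        simp only at e1 e2
        subst e1; subst e2; rfl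
      have hw := hW PP R S Y _ _ _ _ sq1 sq2 sR sS hPB
      obtain ⟨pp, e1, e2⟩ := hw.2 tr ts (h2.trans h3.symm)
      let T' := {p : X × Z // relComp s r p.1 p.2}
      let θ : PP → T' := fun q =>
        ⟨(q.1.1.1.1, q.1.2.1.2), ⟨q.1.1.1.2, q.1.1.2, q.2 ▸ q.1.2.2⟩⟩
      refine ⟨F.map (TypeCat.ofHom θ) pp, ?_, ?_⟩
      · have A : F.map (TypeCat.ofHom (fun p : T' => p.1.1)) (F.map (TypeCat.ofHom θ) pp)
            = F.map (TypeCat.ofHom (fun q : PP => q.1.1.1.1)) pp := fmapc F θ _ pp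
        have B : F.map (TypeCat.ofHom (fun p : R => p.1.1)) (F.map (TypeCat.ofHom (fun q : PP => q.1.1)) pp)
            = F.map (TypeCat.ofHom (fun q : PP => q.1.1.1.1)) pp := fmapc F _ _ pp
        rw [A, ← B, e1, h1]
      · have A : F.map (TypeCat.ofHom (fun p : T' => p.1.2)) (F.map (TypeCat.ofHom θ) pp)
            = F.map (TypeCat.ofHom (fun q : PP => q.1.2.1.2)) pp := fmapc F θ _ pp
        have B : F.map (TypeCat.ofHom (fun p : S => p.1.2)) (F.map (TypeCat.ofHom (fun q : PP => q.1.2)) pp)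
            = F.map (TypeCat.ofHom (fun q : PP => q.1.2.1.2)) pp := fmapc F _ _ pp
        rw [A, ← B, e2, h4]
    · rintro ⟨t, h1, h2⟩
      let R := {p : X × Y // r p.1 p.2}
      let S := {p : Y × Z // s p.1 p.2}
      let T' := {p : X × Z // relComp s r p.1 p.2}
      let yo : T' → Y := fun u => u.2.choose
      have hyo : ∀ u : T', r u.1.1 (yo u) ∧ s (yo u) u.1.2 := fun u => u.2.choose_spec
      let σR : T' → R := fun u => ⟨(u.1.1, yo u), (hyo u).1⟩
      let σS : T' → S := fun u => ⟨(yo u, u.1.2), (hyo u).2⟩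
      refine ⟨F.map (TypeCat.ofHom (fun p : R => p.1.2)) (F.map (TypeCat.ofHom σR) t),
        ⟨F.map (TypeCat.ofHom σR) t, ?_, rfl⟩, ⟨F.map (TypeCat.ofHom σS) t, ?_, ?_⟩⟩
      · have A : F.map (TypeCat.ofHom (fun p : R => p.1.1)) (F.map (TypeCat.ofHom σR) t)
            = F.map (TypeCat.ofHom (fun u : T' => u.1.1)) t := fmapc F σR _ t
        rw [A]; exact h1
      · have A : F.map (TypeCat.ofHom (fun p : S => p.1.1)) (F.map (TypeCat.ofHom σS) t)
            = F.map (TypeCat.ofHom (fun u : T' => yo u)) t := fmapc F σS _ t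
        have B : F.map (TypeCat.ofHom (fun p : R => p.1.2)) (F.map (TypeCat.ofHom σR) t)
            = F.map (TypeCat.ofHom (fun u : T' => yo u)) t := fmapc F σR _ t
        rw [A, B]
      · have A : F.map (TypeCat.ofHom (fun p : S => p.1.2)) (F.map (TypeCat.ofHom σS) t)
            = F.map (TypeCat.ofHom (fun u : T' => u.1.2)) t := fmapc F σS _ t
        rw [A]; exact h2
  · -- backward direction
    intro hF P X Y Z p₁ p₂ f g hp₁ hp₂ hf hg hPB
    constructor
    · intro t
      have hc : (fun p => f (p₁ p)) = fun p => g (p₂ p) := funext hPB.1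
      rw [fmapc, fmapc, hc]
    · intro a b hab
      have hf' : relSurj (graphRel f) := hf
      have hg' : relTotal (relConv (graphRel g)) := hg
      have key := hF X Z Y (graphRel f) (relConv (graphRel g)) hf' hg'
      let Rf := {p : X × Z // graphRel f p.1 p.2}
      let Sg := {p : Z × Y // relConv (graphRel g) p.1 p.2}
      have hmem : BarrLift F (relComp (relConv (graphRel g)) (graphRel f)) a b := by
        rw [← key]
        refine ⟨F.map (TypeCat.ofHom f) a,
          ⟨F.map (TypeCat.ofHom (fun x : X => (⟨(x, f x), rfl⟩ : Rf))) a, ?_, ?_⟩,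
          ⟨F.map (TypeCat.ofHom (fun y : Y => (⟨(g y, y), rfl⟩ : Sg))) b, ?_, ?_⟩⟩
        · have A : F.map (TypeCat.ofHom (fun p : Rf => p.1.1))
              (F.map (TypeCat.ofHom (fun x : X => (⟨(x, f x), rfl⟩ : Rf))) a)
              = F.map (TypeCat.ofHom (fun x : X => x)) a := fmapc F _ _ a
          rw [A]; exact fmapid F a
        · have A : F.map (TypeCat.ofHom (fun p : Rf => p.1.2))
              (F.map (TypeCat.ofHom (fun x : X => (⟨(x, f x), rfl⟩ : Rf))) a)
              = F.map (TypeCat.ofHom (fun x : X => f x)) a := fmapc F _ _ a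
          rw [A]
        · have A : F.map (TypeCat.ofHom (fun p : Sg => p.1.1))
              (F.map (TypeCat.ofHom (fun y : Y => (⟨(g y, y), rfl⟩ : Sg))) b)
              = F.map (TypeCat.ofHom (fun y : Y => g y)) b := fmapc F _ _ b
          rw [A]; exact hab.symm
        · have A : F.map (TypeCat.ofHom (fun p : Sg => p.1.2))
              (F.map (TypeCat.ofHom (fun y : Y => (⟨(g y, y), rfl⟩ : Sg))) b)
              = F.map (TypeCat.ofHom (fun y : Y => y)) b := fmapc F _ _ b
          rw [A]; exact fmapid F b
      obtain ⟨t, h1, h2⟩ := hmem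
      let T' := {p : X × Y // relComp (relConv (graphRel g)) (graphRel f) p.1 p.2}
      have hfg : ∀ u : T', f u.1.1 = g u.1.2 := by
        intro u
        obtain ⟨zz, e1, e2⟩ := u.2
        rw [e1, ← e2]
      let ψ : T' → P := fun u => ((hPB.2 u.1.1 u.1.2 (hfg u)).exists).choose
      have hψ : ∀ u : T', p₁ (ψ u) = u.1.1 ∧ p₂ (ψ u) = u.1.2 :=
        fun u => ((hPB.2 u.1.1 u.1.2 (hfg u)).exists).choose_spec
      refine ⟨F.map (TypeCat.ofHom ψ) t, ?_, ?_⟩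
      · have A : F.map (TypeCat.ofHom p₁) (F.map (TypeCat.ofHom ψ) t) = F.map (TypeCat.ofHom (fun u : T' => p₁ (ψ u))) t := fmapc F ψ p₁ t
        have B : (fun u : T' => p₁ (ψ u)) = fun u : T' => u.1.1 := funext fun u => (hψ u).1
        rw [A, B]; exact h1
      · have A : F.map (TypeCat.ofHom p₂) (F.map (TypeCat.ofHom ψ) t) = F.map (TypeCat.ofHom (fun u : T' => p₂ (ψ u))) t := fmapc F ψ p₂ t
        have B : (fun u : T' => p₂ (ψ u)) = fun u : T' => u.1.2 := funext fun u => (hψ u).2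
        rw [A, B]; exact h2
end

section
/- A Set-functor F preserves 1/4-mono pullbacks if and only if for all relations r : X ⇸ Y and s : Y ⇸ Z such that r is the converse of a partial function or s is a partial function, one has F̄s ⋅ F̄r = F̄(s ⋅ r), where F̄ denotes the Barr lifting of F. -/
open CategoryTheory

universe u

private lemma mapc (F : Type u ⥤ Type u) {X Y Z : Type u} (f : X → Y) (g : Y → Z) (x : F.obj X) :
    F.map (TypeCat.ofHom (fun a => g (f a))) x = F.map (TypeCat.ofHom g) (F.map (TypeCat.ofHom f) x) := by
  exact F.map_comp_apply (TypeCat.ofHom f) (TypeCat.ofHom g) x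

private lemma barr_span (F : Type u ⥤ Type u) {X Y : Type u} (r : Rel' X Y) {P : Type u}
    (q₁ : P → X) (q₂ : P → Y)
    (hall : ∀ p, r (q₁ p) (q₂ p))
    (huniq : ∀ x y, r x y → ∃! p, q₁ p = x ∧ q₂ p = y)
    (a : F.obj X) (b : F.obj Y) :
    BarrLift F r a b ↔ ∃ t : F.obj P, F.map (TypeCat.ofHom q₁) t = a ∧ F.map (TypeCat.ofHom q₂) t = b := by
  classical
  constructor
  · rintro ⟨u, h1, h2⟩
    refine ⟨F.map (TypeCat.ofHom (fun s : {p : X × Y // r p.1 p.2} => (huniq s.1.1 s.1.2 s.2).choose)) u, ?_, ?_⟩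
    · rw [← mapc]
      have he : (fun s : {p : X × Y // r p.1 p.2} => q₁ ((huniq s.1.1 s.1.2 s.2).choose))
          = (fun s : {p : X × Y // r p.1 p.2} => s.1.1) := by
        funext s; exact (huniq s.1.1 s.1.2 s.2).choose_spec.1.1
      rw [he, h1]
    · rw [← mapc]
      have he : (fun s : {p : X × Y // r p.1 p.2} => q₂ ((huniq s.1.1 s.1.2 s.2).choose))
          = (fun s : {p : X × Y // r p.1 p.2} => s.1.2) := by
        funext s; exact (huniq s.1.1 s.1.2 s.2).choose_spec.1.2
      rw [he, h2]
  · rintro ⟨t, h1, h2⟩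
    refine ⟨F.map (TypeCat.ofHom (fun p => (⟨(q₁ p, q₂ p), hall p⟩ : {p : X × Y // r p.1 p.2}))) t, ?_, ?_⟩
    · rw [← mapc]; exact h1
    · rw [← mapc]; exact h2

private lemma barr_graph (F : Type u ⥤ Type u) {X Y : Type u} (f : X → Y)
    (a : F.obj X) (b : F.obj Y) :
    BarrLift F (graphRel f) a b ↔ F.map (TypeCat.ofHom f) a = b := by
  rw [barr_span F (graphRel f) (fun x => x) f (fun p => rfl)
      (fun x y h => ⟨x, ⟨rfl, h⟩, fun p hp => hp.1⟩)]
  constructor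
  · rintro ⟨t, h1, h2⟩
    have ht : t = a := by
      have := FunctorToTypes.map_id_apply F t
      exact this ▸ h1
    rw [← ht]; exact h2
  · intro h
    exact ⟨a, FunctorToTypes.map_id_apply F a, h⟩

private lemma barr_conv_graph (F : Type u ⥤ Type u) {X Y : Type u} (f : X → Y)
    (b : F.obj Y) (a : F.obj X) :
    BarrLift F (relConv (graphRel f)) b a ↔ F.map (TypeCat.ofHom f) a = b := by
  rw [barr_span F (relConv (graphRel f)) f (fun x => x) (fun p => rfl)
      (fun y x h => ⟨x, ⟨h, rfl⟩, fun p hp => hp.2⟩)]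
  constructor
  · rintro ⟨t, h1, h2⟩
    have ht : t = a := by
      have := FunctorToTypes.map_id_apply F t
      exact this ▸ h2
    rw [← ht]; exact h1
  · intro h
    exact ⟨a, h, FunctorToTypes.map_id_apply F a⟩

private lemma barr_id' (F : Type u ⥤ Type u) {X : Type u} (a b : F.obj X) :
    BarrLift F (relId X) a b ↔ a = b := by
  have := barr_graph F (fun x : X => x) a b
  have hg : graphRel (fun x : X => x) = relId X := rfl
  rw [hg] at this
  rw [this]
  constructor
  · intro h; exact (FunctorToTypes.map_id_apply F a).symm.trans h
  · intro h; exact (FunctorToTypes.map_id_apply F a).trans h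

private lemma Fmap_inj (F : Type u ⥤ Type u)
    (hH : ∀ (X Y Z : Type u) (r : Rel' X Y) (s : Rel' Y Z),
        ((∀ (x x' : X) (y : Y), r x y → r x' y → x = x') ∨
          (∀ (y : Y) (z z' : Z), s y z → s y z' → z = z')) →
        relComp (BarrLift F s) (BarrLift F r) = BarrLift F (relComp s r))
    {P X : Type u} (m : P → X) (hm : Function.Injective m) :
    Function.Injective (F.map (TypeCat.ofHom m)) := by
  intro p p' h
  have hpart : ∀ (y : X) (z z' : P), relConv (graphRel m) y z → relConv (graphRel m) y z' → z = z' :=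
    fun y z z' hz hz' => hm (hz.trans hz'.symm)
  have heq := hH P X P (graphRel m) (relConv (graphRel m)) (Or.inr hpart)
  have hid : relComp (relConv (graphRel m)) (graphRel m) = relId P := by
    funext a b; apply propext
    constructor
    · rintro ⟨x, h1, h2⟩; exact hm (h1.trans h2.symm)
    · intro hab; exact ⟨m a, rfl, (congrArg m hab).symm⟩
  rw [hid] at heq
  have hrel : relComp (BarrLift F (relConv (graphRel m))) (BarrLift F (graphRel m)) p p' :=
    ⟨F.map (TypeCat.ofHom m) p, (barr_graph F m p _).mpr rfl, (barr_conv_graph F m _ p').mpr h.symm⟩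
  rw [heq] at hrel
  exact (barr_id' F p p').mp hrel

private lemma invImageExists (F : Type u ⥤ Type u)
    (hH : ∀ (X Y Z : Type u) (r : Rel' X Y) (s : Rel' Y Z),
        ((∀ (x x' : X) (y : Y), r x y → r x' y → x = x') ∨
          (∀ (y : Y) (z z' : Z), s y z → s y z' → z = z')) →
        relComp (BarrLift F s) (BarrLift F r) = BarrLift F (relComp s r))
    {P X Z I : Type u} (m : P → X) (k : P → I) (f : X → Z) (g : I → Z)
    (hg : Function.Injective g) (hpb : IsPBSquare m k f g)
    (a : F.obj X) (i : F.obj I) (h : F.map (TypeCat.ofHom f) a = F.map (TypeCat.ofHom g) i) :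
    ∃ p : F.obj P, F.map (TypeCat.ofHom m) p = a ∧ F.map (TypeCat.ofHom k) p = i := by
  have hpart : ∀ (z : Z) (i1 i2 : I), relConv (graphRel g) z i1 → relConv (graphRel g) z i2 → i1 = i2 :=
    fun z i1 i2 hi hi' => hg (hi.trans hi'.symm)
  have heq := hH X Z I (graphRel f) (relConv (graphRel g)) (Or.inr hpart)
  have hR : BarrLift F (relComp (relConv (graphRel g)) (graphRel f)) a i := by
    rw [← heq]
    exact ⟨F.map (TypeCat.ofHom f) a, (barr_graph F f a _).mpr rfl, (barr_conv_graph F g _ i).mpr h.symm⟩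
  exact (barr_span F (relComp (relConv (graphRel g)) (graphRel f)) m k
    (fun p => ⟨f (m p), rfl, (hpb.1 p).symm⟩)
    (fun x j hxj => hpb.2 x j (by obtain ⟨z, e1, e2⟩ := hxj; exact e1.trans e2.symm)) a i).mp hR

private lemma back_dir (F : Type u ⥤ Type u)
    (hH : ∀ (X Y Z : Type u) (r : Rel' X Y) (s : Rel' Y Z),
        ((∀ (x x' : X) (y : Y), r x y → r x' y → x = x') ∨
          (∀ (y : Y) (z z' : Z), s y z → s y z' → z = z')) →
        relComp (BarrLift F s) (BarrLift F r) = BarrLift F (relComp s r)) :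
    Preserves14MonoPullbacks F := by
  intro P X Y Z p₁ p₂ f g hinj hpb
  constructor
  · intro t
    have hc : (fun p => f (p₁ p)) = (fun p => g (p₂ p)) := funext hpb.1
    calc F.map (TypeCat.ofHom f) (F.map (TypeCat.ofHom p₁) t) = F.map (TypeCat.ofHom (fun p => f (p₁ p))) t := (mapc F p₁ f t).symm
      _ = F.map (TypeCat.ofHom (fun p => g (p₂ p))) t := by rw [hc]
      _ = F.map (TypeCat.ofHom g) (F.map (TypeCat.ofHom p₂) t) := mapc F p₂ g t
  · intro a b hfg
    classical
    let g' : Y → (Set.range g) := fun y => ⟨g y, ⟨y, rfl⟩⟩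
    let k : P → (Set.range g) := fun p => g' (p₂ p)
    have hA : IsPBSquare p₁ k f (fun i : Set.range g => (i : Z)) := by
      constructor
      · intro p; exact hpb.1 p
      · intro x i hxi
        obtain ⟨y, hy⟩ := i.2
        obtain ⟨p, ⟨e1, e2⟩, _⟩ := hpb.2 x y (hxi.trans hy.symm)
        refine ⟨p, ⟨e1, Subtype.ext ?_⟩, ?_⟩
        · show g (p₂ p) = (i : Z)
          rw [e2, hy]
        · rintro p' ⟨e1', _⟩
          exact hinj (e1'.trans e1.symm)
    have h1 : F.map (TypeCat.ofHom f) a = F.map (TypeCat.ofHom (fun i : Set.range g => (i : Z))) (F.map (TypeCat.ofHom g') b) := by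
      rw [← mapc]
      exact hfg
    obtain ⟨p, hm1, hk1⟩ := invImageExists F hH p₁ k f (fun i : Set.range g => (i : Z))
      Subtype.val_injective hA a (F.map (TypeCat.ofHom g') b) h1
    have hfib : ∀ (q : P) (y : Y), k q = g' y → p₂ q = y := by
      intro q y hk
      have hgg : g (p₂ q) = g y := congrArg Subtype.val hk
      obtain ⟨q', ⟨e1, e2⟩, _⟩ := hpb.2 (p₁ q) y ((hpb.1 q).trans hgg)
      rw [← hinj e1]
      exact e2
    let k' : P → (Set.range k) := fun p => ⟨k p, ⟨p, rfl⟩⟩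
    let φ : Set.range k → Y := fun κ => p₂ κ.2.choose
    have hφ : ∀ κ : Set.range k, k κ.2.choose = (κ : Set.range g) := fun κ => κ.2.choose_spec
    have hinjφ : Function.Injective φ := by
      intro κ κ' h
      apply Subtype.ext
      calc (κ : Set.range g) = g' (φ κ) := (hφ κ).symm
        _ = g' (φ κ') := by rw [h]
        _ = (κ' : Set.range g) := hφ κ'
    have hC : IsPBSquare φ (fun κ : Set.range k => κ) g' (fun κ : Set.range k => (κ : Set.range g)) := by
      constructor
      · intro κ; exact hφ κ
      · intro y κ hyκ
        refine ⟨κ, ⟨?_, rfl⟩, ?_⟩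
        · exact hfib κ.2.choose y ((hφ κ).trans hyκ.symm)
        · rintro κ'' ⟨_, e⟩; exact e
    have h2 : F.map (TypeCat.ofHom g') b = F.map (TypeCat.ofHom (fun κ : Set.range k => (κ : Set.range g))) (F.map (TypeCat.ofHom k') p) := by
      rw [← mapc]
      exact hk1.symm
    obtain ⟨q, hq1, hq2⟩ := invImageExists F hH φ (fun κ : Set.range k => κ) g'
      (fun κ : Set.range k => (κ : Set.range g)) Subtype.val_injective hC b (F.map (TypeCat.ofHom k') p) h2
    have hq2' : q = F.map (TypeCat.ofHom k') p := (FunctorToTypes.map_id_apply F q).symm.trans hq2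
    have hp2 : F.map (TypeCat.ofHom p₂) p = b := by
      have hcomp : F.map (TypeCat.ofHom (fun x => φ (k' x))) p = F.map (TypeCat.ofHom φ) (F.map (TypeCat.ofHom k') p) := mapc F k' φ p
      have hfn : (fun x => φ (k' x)) = p₂ := funext (fun x => hfib (k' x).2.choose (p₂ x) ((hφ (k' x)).trans rfl))
      rw [hfn] at hcomp
      rw [hcomp, ← hq2', hq1]
    refine ⟨p, ⟨hm1, hp2⟩, ?_⟩
    rintro p' ⟨e1, _⟩
    exact Fmap_inj F hH p₁ hinj (e1.trans hm1.symm)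

private def Qt {X Y Z : Type u} (r : Rel' X Y) (s : Rel' Y Z) : Type u :=
  {q : {p : X × Y // r p.1 p.2} × {p : Y × Z // s p.1 p.2} // q.1.1.2 = q.2.1.1}

private lemma Qt_pb {X Y Z : Type u} (r : Rel' X Y) (s : Rel' Y Z) :
    IsPBSquare (fun q : Qt r s => q.1.1) (fun q : Qt r s => q.1.2)
      (fun p : {p : X × Y // r p.1 p.2} => p.1.2)
      (fun p : {p : Y × Z // s p.1 p.2} => p.1.1) := by
  constructor
  · exact fun q => q.2
  · intro u v huv
    refine ⟨⟨(u, v), huv⟩, ⟨rfl, rfl⟩, ?_⟩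
    rintro q ⟨h1, h2⟩
    apply Subtype.ext
    exact Prod.ext h1 h2

private lemma Qt_inj1 {X Y Z : Type u} (r : Rel' X Y) (s : Rel' Y Z)
    (hs : ∀ (y : Y) (z z' : Z), s y z → s y z' → z = z') :
    Function.Injective (fun q : Qt r s => q.1.1) := by
  rintro ⟨⟨⟨⟨x, y⟩, hu⟩, ⟨⟨y1, z⟩, hv⟩⟩, hq⟩ ⟨⟨⟨⟨x', y'⟩, hu'⟩, ⟨⟨y1', z'⟩, hv'⟩⟩, hq'⟩ h
  have h' : (⟨(x, y), hu⟩ : {p : X × Y // r p.1 p.2}) = ⟨(x', y'), hu'⟩ := h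
  have hval := congrArg Subtype.val h'
  obtain rfl : x = x' := congrArg Prod.fst hval
  obtain rfl : y = y' := congrArg Prod.snd hval
  obtain rfl : y = y1 := hq
  obtain rfl : y = y1' := hq'
  obtain rfl : z = z' := hs y z z' hv hv'
  rfl

private lemma Qt_inj2 {X Y Z : Type u} (r : Rel' X Y) (s : Rel' Y Z)
    (hr : ∀ (x x' : X) (y : Y), r x y → r x' y → x = x') :
    Function.Injective (fun q : Qt r s => q.1.2) := by
  rintro ⟨⟨⟨⟨x, y⟩, hu⟩, ⟨⟨y1, z⟩, hv⟩⟩, hq⟩ ⟨⟨⟨⟨x', y'⟩, hu'⟩, ⟨⟨y1', z'⟩, hv'⟩⟩, hq'⟩ h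
  have h' : (⟨(y1, z), hv⟩ : {p : Y × Z // s p.1 p.2}) = ⟨(y1', z'), hv'⟩ := h
  have hval := congrArg Subtype.val h'
  obtain rfl : y1 = y1' := congrArg Prod.fst hval
  obtain rfl : z = z' := congrArg Prod.snd hval
  obtain rfl : y = y1 := hq
  obtain rfl : y = y' := hq'.symm
  obtain rfl : x = x' := hr x x' y hu hu'
  rfl

private lemma fwd_dir (F : Type u ⥤ Type u) (hPres : Preserves14MonoPullbacks F)
    (X Y Z : Type u) (r : Rel' X Y) (s : Rel' Y Z)
    (hcase : (∀ (x x' : X) (y : Y), r x y → r x' y → x = x') ∨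
        (∀ (y : Y) (z z' : Z), s y z → s y z' → z = z')) :
    relComp (BarrLift F s) (BarrLift F r) = BarrLift F (relComp s r) := by
  classical
  funext a c
  apply propext
  constructor
  · rintro ⟨b, ⟨u, hu1, hu2⟩, ⟨v, hv1, hv2⟩⟩
    have hFpb : IsPBSquare (F.map (TypeCat.ofHom (fun q : Qt r s => q.1.1))) (F.map (TypeCat.ofHom (fun q : Qt r s => q.1.2)))
        (F.map (TypeCat.ofHom (fun p : {p : X × Y // r p.1 p.2} => p.1.2)))
        (F.map (TypeCat.ofHom (fun p : {p : Y × Z // s p.1 p.2} => p.1.1))) := by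
      rcases hcase with hr | hs
      · have hpb := Qt_pb r s
        have hpb' : IsPBSquare (fun q : Qt r s => q.1.2) (fun q : Qt r s => q.1.1)
            (fun p : {p : Y × Z // s p.1 p.2} => p.1.1)
            (fun p : {p : X × Y // r p.1 p.2} => p.1.2) :=
          ⟨fun q => (hpb.1 q).symm, fun vv uu h => by
            obtain ⟨q, ⟨e1, e2⟩, he⟩ := hpb.2 uu vv h.symm
            exact ⟨q, ⟨e2, e1⟩, fun q' hf => he q' ⟨hf.2, hf.1⟩⟩⟩
        have hres := hPres _ _ _ _ _ _ _ _ (Qt_inj2 r s hr) hpb'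
        exact ⟨fun q => (hres.1 q).symm, fun uu vv h => by
          obtain ⟨q, ⟨e1, e2⟩, he⟩ := hres.2 vv uu h.symm
          exact ⟨q, ⟨e2, e1⟩, fun q' hf => he q' ⟨hf.2, hf.1⟩⟩⟩
      · exact hPres _ _ _ _ _ _ _ _ (Qt_inj1 r s hs) (Qt_pb r s)
    obtain ⟨q, ⟨hq1, hq2⟩, _⟩ := hFpb.2 u v (hu2.trans hv1.symm)
    refine ⟨F.map (TypeCat.ofHom (fun w : Qt r s =>
      (⟨((w.1.1 : X × Y).1, (w.1.2 : Y × Z).2),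
        ⟨(w.1.1 : X × Y).2, w.1.1.2, by rw [w.2]; exact w.1.2.2⟩⟩ :
        {p : X × Z // relComp s r p.1 p.2}))) q, ?_, ?_⟩
    · rw [← mapc]
      have h3 := mapc F (fun w : Qt r s => w.1.1)
        (fun p : {p : X × Y // r p.1 p.2} => p.1.1) q
      rw [hq1, hu1] at h3
      exact h3
    · rw [← mapc]
      have h3 := mapc F (fun w : Qt r s => w.1.2)
        (fun p : {p : Y × Z // s p.1 p.2} => p.1.2) q
      rw [hq2, hv2] at h3
      exact h3
  · rintro ⟨t, h1, h2⟩
    refine ⟨F.map (TypeCat.ofHom (fun w : {w : X × Y × Z // r w.1 w.2.1 ∧ s w.2.1 w.2.2} => w.1.2.1))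
        (F.map (TypeCat.ofHom (fun v : {p : X × Z // relComp s r p.1 p.2} =>
          (⟨(v.1.1, v.2.choose, v.1.2), v.2.choose_spec.1, v.2.choose_spec.2⟩ :
            {w : X × Y × Z // r w.1 w.2.1 ∧ s w.2.1 w.2.2}))) t),
      ⟨F.map (TypeCat.ofHom (fun w : {w : X × Y × Z // r w.1 w.2.1 ∧ s w.2.1 w.2.2} =>
          (⟨(w.1.1, w.1.2.1), w.2.1⟩ : {p : X × Y // r p.1 p.2})))
        (F.map (TypeCat.ofHom (fun v : {p : X × Z // relComp s r p.1 p.2} =>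
          (⟨(v.1.1, v.2.choose, v.1.2), v.2.choose_spec.1, v.2.choose_spec.2⟩ :
            {w : X × Y × Z // r w.1 w.2.1 ∧ s w.2.1 w.2.2}))) t), ?_, ?_⟩,
      ⟨F.map (TypeCat.ofHom (fun w : {w : X × Y × Z // r w.1 w.2.1 ∧ s w.2.1 w.2.2} =>
          (⟨(w.1.2.1, w.1.2.2), w.2.2⟩ : {p : Y × Z // s p.1 p.2})))
        (F.map (TypeCat.ofHom (fun v : {p : X × Z // relComp s r p.1 p.2} =>
          (⟨(v.1.1, v.2.choose, v.1.2), v.2.choose_spec.1, v.2.choose_spec.2⟩ :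
            {w : X × Y × Z // r w.1 w.2.1 ∧ s w.2.1 w.2.2}))) t), ?_, ?_⟩⟩
    · rw [← mapc, ← mapc]
      exact h1
    · rw [← mapc]
    · rw [← mapc]
    · rw [← mapc, ← mapc]
      exact h2


/-- A Set-functor preserves 1/4-mono pullbacks iff the Barr lifting is functorial on
composites in which the first relation is the converse of a partial function or the
second relation is a partial function. -/
theorem stmt16 (F : Type u ⥤ Type u) :
    Preserves14MonoPullbacks F ↔
      ∀ (X Y Z : Type u) (r : Rel' X Y) (s : Rel' Y Z),
        ((∀ (x x' : X) (y : Y), r x y → r x' y → x = x') ∨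
          (∀ (y : Y) (z z' : Z), s y z → s y z' → z = z')) →
        relComp (BarrLift F s) (BarrLift F r) = BarrLift F (relComp s r) := by
  constructor
  · exact fun h X Y Z r s hc => fwd_dir F h X Y Z r s hc
  · exact back_dir F
end

section
/- Let r₁ : X ⇸ X₁, r₂ : X₁ ⇸ X₂ and r₃ : X₂ ⇸ X be total and surjective relations, and let r̂₂ denote the difunctional closure of r₂. If r₃ ⋅ r₂ ⋅ r₁ = 1_X, then r₃ ⋅ r̂₂ ⋅ r₁ = 1_X. -/
open CategoryTheory

universe u

/-- For total and surjective relations `r₁, r₂, r₃` composing to the identity, replacing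
`r₂` by its difunctional closure still yields the identity. -/
theorem stmt18 {X X₁ X₂ : Type u} (r₁ : Rel' X X₁) (r₂ : Rel' X₁ X₂) (r₃ : Rel' X₂ X)
    (h₁t : relTotal r₁) (h₁s : relSurj r₁)
    (h₂t : relTotal r₂) (h₂s : relSurj r₂)
    (h₃t : relTotal r₃) (h₃s : relSurj r₃)
    (h : relComp r₃ (relComp r₂ r₁) = relId X) :
    relComp r₃ (relComp (difunClosure r₂) r₁) = relId X := by
  have hcomp : ∀ x a b x', r₁ x a → r₂ a b → r₃ b x' → x = x' := by
    intro x a b x' h1 h2 h3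
    have := congrFun (congrFun h x) x'
    exact this.mp ⟨b, ⟨a, h1, h2⟩, h3⟩
  have key : ∀ n x a b x', r₁ x a → dfPow r₂ n a b → r₃ b x' → x = x' := by
    intro n
    induction n with
    | zero => exact fun x a b x' h1 h2 h3 => hcomp x a b x' h1 h2 h3
    | succ n ih =>
      rintro x a b x' h1 ⟨m, ⟨k, hak, hmk⟩, hdf⟩ h3
      obtain ⟨x₀, hkx₀⟩ := h₃t k
      have hxx₀ : x = x₀ := hcomp x a k x₀ h1 hak hkx₀
      obtain ⟨x₁', hx₁m⟩ := h₁s m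
      have : x₁' = x₀ := hcomp x₁' m k x₀ hx₁m hmk hkx₀
      have hxm : r₁ x m := by rw [hxx₀, ← this]; exact hx₁m
      exact ih x m b x' hxm hdf h3
  funext x x'
  apply propext
  constructor
  · rintro ⟨b, ⟨a, h1, n, hdf⟩, h3⟩
    exact key n x a b x' h1 hdf h3
  · rintro rfl
    have := (congrFun (congrFun h x) x).mpr rfl
    obtain ⟨b, ⟨a, h1, h2⟩, h3⟩ := this
    exact ⟨b, ⟨a, h1, 0, h2⟩, h3⟩
end

section
/- Let F be a Set-functor that preserves 1/4-iso pullbacks, and let r₁, …, rₙ be a composable sequence of total and surjective relations. If rₙ ⋅ … ⋅ r₁ = 1_X for some set X, then F̄rₙ ⋅ … ⋅ F̄r₁ ≤ 1_{F X}, where F̄ denotes the Barr lifting of F. -/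
open CategoryTheory

universe u

/-- The composite of a chain of total relations is total. -/
theorem relChain_comp_total : ∀ {X Z : Type u} (c : RelChain X Z),
    RelChain.allTS c → relTotal (RelChain.comp c)
  | _, _, .single _, h => h.1
  | _, _, .cons r c, h => by
    intro x
    obtain ⟨y, hy⟩ := h.1.1 x
    obtain ⟨z, hz⟩ := relChain_comp_total c h.2 y
    exact ⟨z, y, hy, hz⟩

/-- Key lemma: if the composite of a chain of total & surjective relations, precomposed
with a surjective relation, is contained in the identity, then there is a function `h`
containing the composite, through which the Barr-lifting composite factors. -/
theorem barr_key (F : Type u ⥤ Type u) : ∀ {Y X₀ : Type u} (c : RelChain Y X₀),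
    RelChain.allTS c → ∀ u : Rel' X₀ Y, relSurj u →
    (∀ x x', relComp (RelChain.comp c) u x x' → x = x') →
    ∃ h : Y → X₀, (∀ y x, RelChain.comp c y x → h y = x) ∧
      (∀ b a, RelChain.barr F c b a → F.map (TypeCat.ofHom h) b = a)
  | Y, X₀, .single r, hTS, u, hu, hcu => by
    have htot : relTotal r := hTS.1
    choose h hh using htot
    have spec : ∀ y x, r y x → h y = x := by
      intro y x hyx
      obtain ⟨x₀, hx₀⟩ := hu y
      have e1 : x₀ = x := hcu x₀ x ⟨y, hx₀, hyx⟩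
      have e2 : x₀ = h y := hcu x₀ (h y) ⟨y, hx₀, hh y⟩
      rw [← e2, e1]
    refine ⟨h, spec, ?_⟩
    rintro b a ⟨t, ht1, ht2⟩
    have hfe : (fun p : {p : Y × X₀ // r p.1 p.2} => h p.1.1) =
        (fun p : {p : Y × X₀ // r p.1 p.2} => p.1.2) :=
      funext fun p => spec _ _ p.2
    calc F.map (TypeCat.ofHom h) b
        = F.map (TypeCat.ofHom h) (F.map (TypeCat.ofHom (fun p : {p : Y × X₀ // r p.1 p.2} => p.1.1)) t) := by rw [ht1]
      _ = F.map (TypeCat.ofHom (fun p : {p : Y × X₀ // r p.1 p.2} => p.1.1) ≫ TypeCat.ofHom h) t :=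
          (FunctorToTypes.map_comp_apply F _ _ t).symm
      _ = F.map (TypeCat.ofHom (fun p : {p : Y × X₀ // r p.1 p.2} => p.1.2)) t := by
          have hstep : F.map (TypeCat.ofHom (fun p : {p : Y × X₀ // r p.1 p.2} => h p.1.1)) t =
              F.map (TypeCat.ofHom (fun p : {p : Y × X₀ // r p.1 p.2} => p.1.2)) t := by rw [hfe]
          exact hstep
      _ = a := ht2
  | Y, X₀, .cons (Y := Y') r c, hTS, u, hu, hcu => by
    -- r : Rel' Y Y', c : RelChain Y' X₀
    have hu' : relSurj (relComp r u) := by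
      intro y'
      obtain ⟨y, hy⟩ := hTS.1.2 y'
      obtain ⟨x, hx⟩ := hu y
      exact ⟨x, y, hx, hy⟩
    have hcu' : ∀ x x', relComp (RelChain.comp c) (relComp r u) x x' → x = x' := by
      rintro x x' ⟨y', ⟨y, hxy, hyy'⟩, hcyx⟩
      exact hcu x x' ⟨y, hxy, y', hyy', hcyx⟩
    obtain ⟨h', spec', barr'⟩ := barr_key F c hTS.2 (relComp r u) hu' hcu'
    have htot : relTotal (RelChain.comp (RelChain.cons r c)) :=
      relChain_comp_total _ hTS
    choose h hh using htot
    have spec : ∀ y x, RelChain.comp (RelChain.cons r c) y x → h y = x := by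
      intro y x hyx
      obtain ⟨x₀, hx₀⟩ := hu y
      have e1 : x₀ = x := hcu x₀ x ⟨y, hx₀, hyx⟩
      have e2 : x₀ = h y := hcu x₀ (h y) ⟨y, hx₀, hh y⟩
      rw [← e2, e1]
    have bridge : ∀ y y', r y y' → h y = h' y' := by
      intro y y' hr
      obtain ⟨x, hx⟩ := relChain_comp_total c hTS.2 y'
      have e1 : h y = x := spec y x ⟨y', hr, hx⟩
      have e2 : h' y' = x := spec' y' x hx
      rw [e1, e2]
    refine ⟨h, spec, ?_⟩
    rintro b a ⟨m, ⟨t, ht1, ht2⟩, hma⟩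
    have hfe : (fun p : {p : Y × Y' // r p.1 p.2} => h p.1.1) =
        (fun p : {p : Y × Y' // r p.1 p.2} => h' p.1.2) :=
      funext fun p => bridge _ _ p.2
    calc F.map (TypeCat.ofHom h) b
        = F.map (TypeCat.ofHom h) (F.map (TypeCat.ofHom (fun p : {p : Y × Y' // r p.1 p.2} => p.1.1)) t) := by rw [ht1]
      _ = F.map (TypeCat.ofHom (fun p : {p : Y × Y' // r p.1 p.2} => p.1.1) ≫ TypeCat.ofHom h) t :=
          (FunctorToTypes.map_comp_apply F _ _ t).symm
      _ = F.map (TypeCat.ofHom (fun p : {p : Y × Y' // r p.1 p.2} => p.1.2) ≫ TypeCat.ofHom h') t := by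
          have hstep : F.map (TypeCat.ofHom (fun p : {p : Y × Y' // r p.1 p.2} => h p.1.1)) t =
              F.map (TypeCat.ofHom (fun p : {p : Y × Y' // r p.1 p.2} => h' p.1.2)) t := by rw [hfe]
          exact hstep
      _ = F.map (TypeCat.ofHom h') (F.map (TypeCat.ofHom (fun p : {p : Y × Y' // r p.1 p.2} => p.1.2)) t) :=
          FunctorToTypes.map_comp_apply F _ _ t
      _ = F.map (TypeCat.ofHom h') m := by rw [ht2]
      _ = a := barr' m a hma

/-- For a functor preserving 1/4-iso pullbacks, every composable sequence of total and
surjective relations composing to an identity has a subidentity Barr-lifting composite. -/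
theorem stmt19 (F : Type u ⥤ Type u) (h : Preserves14IsoPullbacks F)
    (X : Type u) (c : RelChain X X) (hTS : RelChain.allTS c)
    (hc : RelChain.comp c = relId X) :
    relLe (RelChain.barr F c) (relId (F.obj X)) := by
  have hu : relSurj (relId X) := fun x => ⟨x, rfl⟩
  have hcu : ∀ x x', relComp (RelChain.comp c) (relId X) x x' → x = x' := by
    rintro x x' ⟨y, (hxy : x = y), hcyx⟩
    rw [hc] at hcyx
    exact hxy.trans hcyx
  obtain ⟨h₀, spec, barr'⟩ := barr_key F c hTS (relId X) hu hcu
  have hid : h₀ = id := funext fun x => spec x x (by rw [hc]; rfl)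
  intro x y hxy
  have := barr' x y hxy
  rw [hid] at this
  rw [show TypeCat.ofHom (id : X → X) = 𝟙 X from rfl, FunctorToTypes.map_id_apply] at this
  exact this
end
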